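/- Lower bound on PS (by exchanging x with x' and y with y' in the PN bound): for every P as in the context, P(Y₁ = true ∧ X = false ∧ Y = false) ≥ P(Y₁ = true) − P(Y = true); consequently, if P(X = false ∧ Y = false) > 0 then PS ≥ max {0, (P(Y₁ = true) − P(Y = true)) / P(X = false ∧ Y = false)}. -/
import Mathlib


/-- The probability of an event `E` under a mass function `P` on a finite type. -/
noncomputable def prob {Ω : Type*} [Fintype Ω] (P : Ω → ℝ) (E : Set Ω) : ℝ :=
  ∑ ω, E.indicator P ω

/-- The binary counterfactual sample space: coordinates `(Y₀, Y₁, X)`, i.e. the potential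
outcomes `Y₀ = Y_{x'}` and `Y₁ = Y_x` and the treatment `X`. -/
abbrev BOmega : Type := Bool × Bool × Bool

/-- The observed outcome defined by consistency: `Y := if X then Y₁ else Y₀`. -/
def Yobs (ω : BOmega) : Bool := if ω.2.2 then ω.2.1 else ω.1

/-- Lower bound on PS: `P(y_x, x', y') ≥ P(y_x) − P(y)`; consequently, if
`P(x', y') > 0` then `PS ≥ max {0, (P(y_x) − P(y)) / P(x', y')}`. -/
theorem ps_lower_bound
    (P : BOmega → ℝ) (hP0 : ∀ ω, 0 ≤ P ω) (hP1 : ∑ ω, P ω = 1) :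
    (prob P {ω | ω.2.1 = true} - prob P {ω | Yobs ω = true} ≤
      prob P {ω | ω.2.1 = true ∧ ω.2.2 = false ∧ Yobs ω = false}) ∧
    (0 < prob P {ω | ω.2.2 = false ∧ Yobs ω = false} →
      max 0 ((prob P {ω | ω.2.1 = true} - prob P {ω | Yobs ω = true}) /
          prob P {ω | ω.2.2 = false ∧ Yobs ω = false}) ≤
        prob P {ω | ω.2.1 = true ∧ ω.2.2 = false ∧ Yobs ω = false} /
          prob P {ω | ω.2.2 = false ∧ Yobs ω = false}) := by
  have h1 : prob P {ω | ω.2.1 = true} - prob P {ω | Yobs ω = true} ≤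
      prob P {ω | ω.2.1 = true ∧ ω.2.2 = false ∧ Yobs ω = false} := by
    have h := fun b1 b2 b3 => hP0 (b1, b2, b3)
    simp only [prob, Set.indicator, Fintype.sum_prod_type, Fintype.sum_bool,
      Set.mem_setOf_eq, Yobs] at *
    norm_num
    linarith [h true true true, h false true true, h true false false, h false false true,
      h true true false, h false true false, h true false true, h false false false]
  refine ⟨h1, fun hpos => ?_⟩
  have hnum : 0 ≤ prob P {ω | ω.2.1 = true ∧ ω.2.2 = false ∧ Yobs ω = false} := by
    apply Finset.sum_nonneg
    intro ω _
    exact Set.indicator_nonneg (fun ω _ => hP0 ω) ω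
  rw [max_le_iff]
  constructor
  · positivity
  · exact div_le_div_of_nonneg_right h1 hpos.le
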